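/- At every nondegenerate u ∈ ℝ³ the area A_ijk is differentiable in u_i with ∂A_ijk/∂u_i (u) = (1/2) l_ij(u) h_ij^k(u) + (1/2) l_ki(u) h_ik^j(u). -/

import Mathlib

open Real Filter Topology

/-- Edge length of a decorated edge with inversive distance `I`, base radii `ra, rb`
and conformal factors `x, y`. -/
noncomputable def elen (I ra rb x y : ℝ) : ℝ :=
  Real.sqrt ((Real.exp x * ra) ^ 2 + (Real.exp y * rb) ^ 2 +
    2 * I * (Real.exp x * ra) * (Real.exp y * rb))

/-- Inner angle of a Euclidean triangle opposite the side `lc`, adjacent to `la, lb`. -/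
noncomputable def ang (la lb lc : ℝ) : ℝ :=
  Real.arccos ((la ^ 2 + lb ^ 2 - lc ^ 2) / (2 * la * lb))

/-- Signed distance of the edge center to the vertex with scaled radius `ra`. -/
noncomputable def dCen (I ra rb l : ℝ) : ℝ := (ra ^ 2 + I * ra * rb) / l

/-- Signed height `(d_ac - d_ab * cos th) / sin th`. -/
noncomputable def hgt (dac dab th : ℝ) : ℝ := (dac - dab * Real.cos th) / Real.sin th

/-- Strict triangle inequalities for three side lengths. -/
def Nondeg (a b c : ℝ) : Prop := a < b + c ∧ b < c + a ∧ c < a + b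

noncomputable def Lij (ri rj rk Iij Ijk Iki ui uj uk : ℝ) : ℝ := elen Iij ri rj ui uj
noncomputable def Ljk (ri rj rk Iij Ijk Iki ui uj uk : ℝ) : ℝ := elen Ijk rj rk uj uk
noncomputable def Lki (ri rj rk Iij Ijk Iki ui uj uk : ℝ) : ℝ := elen Iki rk ri uk ui

/-- Inner angle `θ_jk^i` at vertex `i`. -/
noncomputable def ThI (ri rj rk Iij Ijk Iki ui uj uk : ℝ) : ℝ :=
  ang (Lij ri rj rk Iij Ijk Iki ui uj uk) (Lki ri rj rk Iij Ijk Iki ui uj uk)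
    (Ljk ri rj rk Iij Ijk Iki ui uj uk)

/-- Inner angle `θ_ki^j` at vertex `j`. -/
noncomputable def ThJ (ri rj rk Iij Ijk Iki ui uj uk : ℝ) : ℝ :=
  ang (Lij ri rj rk Iij Ijk Iki ui uj uk) (Ljk ri rj rk Iij Ijk Iki ui uj uk)
    (Lki ri rj rk Iij Ijk Iki ui uj uk)

/-- Inner angle `θ_ij^k` at vertex `k`. -/
noncomputable def ThK (ri rj rk Iij Ijk Iki ui uj uk : ℝ) : ℝ :=
  ang (Ljk ri rj rk Iij Ijk Iki ui uj uk) (Lki ri rj rk Iij Ijk Iki ui uj uk)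
    (Lij ri rj rk Iij Ijk Iki ui uj uk)

noncomputable def Dij (ri rj rk Iij Ijk Iki ui uj uk : ℝ) : ℝ :=
  dCen Iij (Real.exp ui * ri) (Real.exp uj * rj) (Lij ri rj rk Iij Ijk Iki ui uj uk)
noncomputable def Dji (ri rj rk Iij Ijk Iki ui uj uk : ℝ) : ℝ :=
  dCen Iij (Real.exp uj * rj) (Real.exp ui * ri) (Lij ri rj rk Iij Ijk Iki ui uj uk)
noncomputable def Djk (ri rj rk Iij Ijk Iki ui uj uk : ℝ) : ℝ :=
  dCen Ijk (Real.exp uj * rj) (Real.exp uk * rk) (Ljk ri rj rk Iij Ijk Iki ui uj uk)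
noncomputable def Dkj (ri rj rk Iij Ijk Iki ui uj uk : ℝ) : ℝ :=
  dCen Ijk (Real.exp uk * rk) (Real.exp uj * rj) (Ljk ri rj rk Iij Ijk Iki ui uj uk)
noncomputable def Dki (ri rj rk Iij Ijk Iki ui uj uk : ℝ) : ℝ :=
  dCen Iki (Real.exp uk * rk) (Real.exp ui * ri) (Lki ri rj rk Iij Ijk Iki ui uj uk)
noncomputable def Dik (ri rj rk Iij Ijk Iki ui uj uk : ℝ) : ℝ :=
  dCen Iki (Real.exp ui * ri) (Real.exp uk * rk) (Lki ri rj rk Iij Ijk Iki ui uj uk)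

/-- The height `h_ij^k`. -/
noncomputable def Hijk (ri rj rk Iij Ijk Iki ui uj uk : ℝ) : ℝ :=
  hgt (Dik ri rj rk Iij Ijk Iki ui uj uk) (Dij ri rj rk Iij Ijk Iki ui uj uk)
    (ThI ri rj rk Iij Ijk Iki ui uj uk)

/-- The height `h_ik^j`. -/
noncomputable def Hikj (ri rj rk Iij Ijk Iki ui uj uk : ℝ) : ℝ :=
  hgt (Dij ri rj rk Iij Ijk Iki ui uj uk) (Dik ri rj rk Iij Ijk Iki ui uj uk)
    (ThI ri rj rk Iij Ijk Iki ui uj uk)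

/-- The height `h_jk^i`. -/
noncomputable def Hjki (ri rj rk Iij Ijk Iki ui uj uk : ℝ) : ℝ :=
  hgt (Dji ri rj rk Iij Ijk Iki ui uj uk) (Djk ri rj rk Iij Ijk Iki ui uj uk)
    (ThJ ri rj rk Iij Ijk Iki ui uj uk)

/-- The height `h_ki^j`. -/
noncomputable def Hkij (ri rj rk Iij Ijk Iki ui uj uk : ℝ) : ℝ :=
  hgt (Dkj ri rj rk Iij Ijk Iki ui uj uk) (Dki ri rj rk Iij Ijk Iki ui uj uk)
    (ThK ri rj rk Iij Ijk Iki ui uj uk)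

/-- The area `A_ijk = (1/2) l_ij l_jk sin θ_ki^j`. -/
noncomputable def Area (ri rj rk Iij Ijk Iki ui uj uk : ℝ) : ℝ :=
  (1 / 2) * Lij ri rj rk Iij Ijk Iki ui uj uk * Ljk ri rj rk Iij Ijk Iki ui uj uk *
    Real.sin (ThJ ri rj rk Iij Ijk Iki ui uj uk)

/-- Nondegeneracy of the decorated triangle at `u`. -/
def NondegT (ri rj rk Iij Ijk Iki ui uj uk : ℝ) : Prop :=
  Nondeg (Lij ri rj rk Iij Ijk Iki ui uj uk) (Ljk ri rj rk Iij Ijk Iki ui uj uk)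
    (Lki ri rj rk Iij Ijk Iki ui uj uk)


/- ### Auxiliary lemmas -/

lemma earg_pos {I ra rb : ℝ} (hI : 0 < I) (hra : 0 < ra) (hrb : 0 < rb) (x y : ℝ) :
    0 < (Real.exp x * ra) ^ 2 + (Real.exp y * rb) ^ 2 +
      2 * I * (Real.exp x * ra) * (Real.exp y * rb) := by
  have h1 : 0 < Real.exp x * ra := by positivity
  have h2 : 0 < Real.exp y * rb := by positivity
  positivity

lemma elen_sq {I ra rb : ℝ} (hI : 0 < I) (hra : 0 < ra) (hrb : 0 < rb) (x y : ℝ) :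
    (elen I ra rb x y) ^ 2 = (Real.exp x * ra) ^ 2 + (Real.exp y * rb) ^ 2 +
      2 * I * (Real.exp x * ra) * (Real.exp y * rb) :=
  Real.sq_sqrt (earg_pos hI hra hrb x y).le

lemma elen_pos {I ra rb : ℝ} (hI : 0 < I) (hra : 0 < ra) (hrb : 0 < rb) (x y : ℝ) :
    0 < elen I ra rb x y :=
  Real.sqrt_pos.mpr (earg_pos hI hra hrb x y)

lemma cos_bnd {a b c : ℝ} (ha : 0 < a) (hb : 0 < b) (hc : 0 < c)
    (h1 : a < b + c) (h2 : b < c + a) (h3 : c < a + b) :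
    -1 ≤ (a ^ 2 + b ^ 2 - c ^ 2) / (2 * a * b) ∧
      (a ^ 2 + b ^ 2 - c ^ 2) / (2 * a * b) ≤ 1 := by
  have hab : (0:ℝ) < 2 * a * b := by positivity
  constructor
  · rw [le_div_iff₀ hab]
    nlinarith [mul_pos (show (0:ℝ) < a + b - c by linarith) (show (0:ℝ) < a + b + c by linarith)]
  · rw [div_le_one hab]
    nlinarith [mul_pos (show (0:ℝ) < c + a - b by linarith) (show (0:ℝ) < c - a + b by linarith)]

lemma heron_pos {a b c : ℝ} (h1 : a < b + c) (h2 : b < c + a) (h3 : c < a + b) :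
    0 < 4 * a ^ 2 * b ^ 2 - (a ^ 2 + b ^ 2 - c ^ 2) ^ 2 := by
  nlinarith [mul_pos (mul_pos (show (0:ℝ) < b + c - a by linarith)
      (show (0:ℝ) < c + a - b by linarith))
    (mul_pos (show (0:ℝ) < a + b - c by linarith) (show (0:ℝ) < a + b + c by linarith))]

lemma area_eq_sqrt (ri rj rk Iij Ijk Iki : ℝ) (hri : 0 < ri) (hrj : 0 < rj) (hrk : 0 < rk)
    (hIij : 1 < Iij) (hIjk : 1 < Ijk) (hIki : 1 < Iki) (ui uj uk : ℝ)
    (hnd : NondegT ri rj rk Iij Ijk Iki ui uj uk) :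
    Area ri rj rk Iij Ijk Iki ui uj uk = (1 / 4) * Real.sqrt
      (4 * (elen Iij ri rj ui uj) ^ 2 * (elen Iki rk ri uk ui) ^ 2 -
        ((elen Iij ri rj ui uj) ^ 2 + (elen Iki rk ri uk ui) ^ 2 -
          (elen Ijk rj rk uj uk) ^ 2) ^ 2) := by
  unfold NondegT Nondeg Lij Ljk Lki at hnd
  obtain ⟨h1, h2, h3⟩ := hnd
  have ha : 0 < elen Iij ri rj ui uj := elen_pos (by linarith) hri hrj ui uj
  have hb : 0 < elen Ijk rj rk uj uk := elen_pos (by linarith) hrj hrk uj uk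
  have hc : 0 < elen Iki rk ri uk ui := elen_pos (by linarith) hrk hri uk ui
  unfold Area ThJ ang Lij Ljk Lki
  set a := elen Iij ri rj ui uj
  set b := elen Ijk rj rk uj uk
  set c := elen Iki rk ri uk ui
  rw [Real.sin_arccos]
  have key : 4 * a ^ 2 * c ^ 2 - (a ^ 2 + c ^ 2 - b ^ 2) ^ 2 =
      (2 * a * b) ^ 2 * (1 - ((a ^ 2 + b ^ 2 - c ^ 2) / (2 * a * b)) ^ 2) := by
    field_simp
    ring
  rw [key, Real.sqrt_mul (sq_nonneg _), Real.sqrt_sq (by positivity)]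
  ring

/-- `∂ A_ijk / ∂ u_i = (1/2) l_ij h_ij^k + (1/2) l_ki h_ik^j`. -/
theorem hasDerivAt_area (ri rj rk Iij Ijk Iki : ℝ) (hri : 0 < ri) (hrj : 0 < rj) (hrk : 0 < rk)
    (hIij : 1 < Iij) (hIjk : 1 < Ijk) (hIki : 1 < Iki)
    (ui uj uk : ℝ) (hnd : NondegT ri rj rk Iij Ijk Iki ui uj uk) :
    HasDerivAt (fun t => Area ri rj rk Iij Ijk Iki t uj uk)
      ((1 / 2) * Lij ri rj rk Iij Ijk Iki ui uj uk * Hijk ri rj rk Iij Ijk Iki ui uj uk +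
        (1 / 2) * Lki ri rj rk Iij Ijk Iki ui uj uk * Hikj ri rj rk Iij Ijk Iki ui uj uk) ui := by
  have hIij0 : (0:ℝ) < Iij := by linarith
  have hIjk0 : (0:ℝ) < Ijk := by linarith
  have hIki0 : (0:ℝ) < Iki := by linarith
  -- notation
  set SA : ℝ → ℝ := fun t => (Real.exp t * ri) ^ 2 + (Real.exp uj * rj) ^ 2 +
    2 * Iij * (Real.exp t * ri) * (Real.exp uj * rj) with hSA
  set SC : ℝ → ℝ := fun t => (Real.exp uk * rk) ^ 2 + (Real.exp t * ri) ^ 2 +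
    2 * Iki * (Real.exp uk * rk) * (Real.exp t * ri) with hSC
  set SB : ℝ := (Real.exp uj * rj) ^ 2 + (Real.exp uk * rk) ^ 2 +
    2 * Ijk * (Real.exp uj * rj) * (Real.exp uk * rk) with hSB
  have hSAsq : ∀ t, (elen Iij ri rj t uj) ^ 2 = SA t := fun t => elen_sq hIij0 hri hrj t uj
  have hSCsq : ∀ t, (elen Iki rk ri uk t) ^ 2 = SC t := fun t => elen_sq hIki0 hrk hri uk t
  have hSBsq : (elen Ijk rj rk uj uk) ^ 2 = SB := elen_sq hIjk0 hrj hrk uj uk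
  -- nondegeneracy data at ui
  have hnd' := hnd
  unfold NondegT Nondeg Lij Ljk Lki at hnd'
  obtain ⟨h1, h2, h3⟩ := hnd'
  have ha : 0 < elen Iij ri rj ui uj := elen_pos hIij0 hri hrj ui uj
  have hb : 0 < elen Ijk rj rk uj uk := elen_pos hIjk0 hrj hrk uj uk
  have hc : 0 < elen Iki rk ri uk ui := elen_pos hIki0 hrk hri uk ui
  set a := elen Iij ri rj ui uj with hadef
  set b := elen Ijk rj rk uj uk with hbdef
  set c := elen Iki rk ri uk ui with hcdef
  -- positivity of Q at ui
  have hQpos : 0 < 4 * SA ui * SC ui - (SA ui + SC ui - SB) ^ 2 := by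
    rw [← hSAsq ui, ← hSCsq ui, ← hSBsq]
    exact heron_pos (by linarith) (by linarith) (by linarith)
  -- the abbreviations
  set x := Real.exp ui * ri with hxdef
  set y := Real.exp uj * rj with hydef
  set z := Real.exp uk * rk with hzdef
  -- derivative of the components
  have hX : HasDerivAt (fun t => Real.exp t * ri) x ui := by
    simpa [hxdef] using (Real.hasDerivAt_exp ui).mul_const ri
  have hSA' : HasDerivAt SA (2 * x ^ 2 + 2 * Iij * x * y) ui := by
    have h1 := ((hX.pow 2).add_const (y ^ 2)).add ((hX.const_mul (2 * Iij)).mul_const y)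
    refine h1.congr_deriv ?_
    ring
  have hSC' : HasDerivAt SC (2 * x ^ 2 + 2 * Iki * z * x) ui := by
    have h1 := ((hX.pow 2).const_add (z ^ 2)).add ((hX.const_mul (2 * Iki * z)))
    refine h1.congr_deriv ?_
    ring
  have hQ' : HasDerivAt (fun t => 4 * SA t * SC t - (SA t + SC t - SB) ^ 2)
      (4 * ((2 * x ^ 2 + 2 * Iij * x * y) * SC ui + SA ui * (2 * x ^ 2 + 2 * Iki * z * x)) -
        2 * (SA ui + SC ui - SB) *
          ((2 * x ^ 2 + 2 * Iij * x * y) + (2 * x ^ 2 + 2 * Iki * z * x))) ui := by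
    have h1 := ((hSA'.const_mul 4).mul hSC').sub (((hSA'.add hSC').sub_const SB).pow 2)
    refine h1.congr_deriv ?_
    simp only [Pi.add_apply]
    ring
  set s := Real.sqrt (4 * SA ui * SC ui - (SA ui + SC ui - SB) ^ 2) with hsdef
  have hs : 0 < s := Real.sqrt_pos.mpr hQpos
  have hG : HasDerivAt (fun t => (1 / 4) * Real.sqrt (4 * SA t * SC t - (SA t + SC t - SB) ^ 2))
      ((1 / 4) * ((4 * ((2 * x ^ 2 + 2 * Iij * x * y) * SC ui + SA ui * (2 * x ^ 2 + 2 * Iki * z * x)) -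
        2 * (SA ui + SC ui - SB) *
          ((2 * x ^ 2 + 2 * Iij * x * y) + (2 * x ^ 2 + 2 * Iki * z * x))) / (2 * s))) ui :=
    (hQ'.sqrt hQpos.ne').const_mul (1 / 4)
  -- eventual equality of Area with the sqrt formula
  have hcont1 : Continuous fun t => elen Iij ri rj t uj := by
    unfold elen; fun_prop
  have hcont3 : Continuous fun t => elen Iki rk ri uk t := by
    unfold elen; fun_prop
  have hEv : ∀ᶠ t in nhds ui, NondegT ri rj rk Iij Ijk Iki t uj uk := by
    have e1 : ∀ᶠ t in nhds ui, (fun t => elen Iij ri rj t uj) t <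
        (fun t => elen Ijk rj rk uj uk + elen Iki rk ri uk t) t :=
      hcont1.continuousAt.eventually_lt (by fun_prop) h1
    have e2 : ∀ᶠ t in nhds ui, (fun _ : ℝ => elen Ijk rj rk uj uk) t <
        (fun t => elen Iki rk ri uk t + elen Iij ri rj t uj) t :=
      continuousAt_const.eventually_lt (by fun_prop) h2
    have e3 : ∀ᶠ t in nhds ui, (fun t => elen Iki rk ri uk t) t <
        (fun t => elen Iij ri rj t uj + elen Ijk rj rk uj uk) t :=
      hcont3.continuousAt.eventually_lt (by fun_prop) h3
    filter_upwards [e1, e2, e3] with t ht1 ht2 ht3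
    exact ⟨ht1, ht2, ht3⟩
  have hEq : (fun t => Area ri rj rk Iij Ijk Iki t uj uk) =ᶠ[nhds ui]
      (fun t => (1 / 4) * Real.sqrt (4 * SA t * SC t - (SA t + SC t - SB) ^ 2)) := by
    filter_upwards [hEv] with t ht
    rw [area_eq_sqrt ri rj rk Iij Ijk Iki hri hrj hrk hIij hIjk hIki t uj uk ht,
      hSAsq t, hSCsq t, hSBsq]
  have hF := hG.congr_of_eventuallyEq hEq
  refine hF.congr_deriv ?_
  -- now the algebraic identity between the two derivative values
  have ha2 : a ^ 2 = SA ui := hSAsq ui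
  have hc2 : c ^ 2 = SC ui := hSCsq ui
  have hb2 : b ^ 2 = SB := hSBsq
  have hvb := cos_bnd ha hc hb (by linarith) (by linarith) (by linarith)
  have hcos : Real.cos (ThI ri rj rk Iij Ijk Iki ui uj uk) =
      (a ^ 2 + c ^ 2 - b ^ 2) / (2 * a * c) := by
    unfold ThI ang Lij Ljk Lki
    exact Real.cos_arccos hvb.1 hvb.2
  have hsin : Real.sin (ThI ri rj rk Iij Ijk Iki ui uj uk) = s / (2 * a * c) := by
    unfold ThI ang Lij Ljk Lki
    rw [Real.sin_arccos]
    have key : 4 * SA ui * SC ui - (SA ui + SC ui - SB) ^ 2 =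
        (2 * a * c) ^ 2 * (1 - ((a ^ 2 + c ^ 2 - b ^ 2) / (2 * a * c)) ^ 2) := by
      rw [← ha2, ← hc2, ← hb2]; field_simp; ring
    have hseq : s = 2 * a * c * Real.sqrt (1 - ((a ^ 2 + c ^ 2 - b ^ 2) / (2 * a * c)) ^ 2) := by
      rw [hsdef, key, Real.sqrt_mul (sq_nonneg _), Real.sqrt_sq (by positivity)]
    rw [hseq]
    rw [mul_div_cancel_left₀ _ (by positivity)]
  unfold Hijk Hikj hgt Dik Dij dCen Lij Lki
  rw [hcos, hsin]
  rw [← ha2, ← hc2, ← hb2]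
  have h2ac : (2:ℝ) * a * c ≠ 0 := by positivity
  rw [← hadef, ← hcdef]
  field_simp
  ring
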